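/- With the notation of the previous statement (a>0, k₃>0, L>0, |bL²| ≠ |ac|), the transmission coefficients t₊ = t₋ = i·k₃(b²L²/a + ac²/L²)/D are equal, and at λ* = 2k₃bc (the zero of r₊) the corresponding transmittance satisfies |t₊|² = (b²L²/a + ac²/L²)² / ( (b²L²/a - ac²/L²)² + 4b²c² ), which exceeds 1 whenever b ≠ 0, c ≠ 0 and (b²L²/a + ac²/L²)² > (b²L²/a - ac²/L²)² + 4b²c². -/

import Mathlib

open Complex

noncomputable def Dden (a b c k3 L lam : ℝ) : ℂ :=
  Complex.I * (k3 : ℂ) * ((b ^ 2 * L ^ 2 / a - a * c ^ 2 / L ^ 2 : ℝ) : ℂ) - (lam : ℂ)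

noncomputable def tPlus (a b c k3 L lam : ℝ) : ℂ :=
  Complex.I * (k3 : ℂ) * ((b ^ 2 * L ^ 2 / a + a * c ^ 2 / L ^ 2 : ℝ) : ℂ) / Dden a b c k3 L lam

noncomputable def tMinus (a b c k3 L lam : ℝ) : ℂ :=
  Complex.I * (k3 : ℂ) * ((b ^ 2 * L ^ 2 / a + a * c ^ 2 / L ^ 2 : ℝ) : ℂ) / Dden a b c k3 L lam

theorem stmt8 (a b c k3 L : ℝ) (ha : 0 < a) (hk3 : 0 < k3) (hL : 0 < L)
    (hne1 : b * L ^ 2 ≠ a * c) (hne2 : b * L ^ 2 ≠ -(a * c)) :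
    (∀ lam : ℝ, tPlus a b c k3 L lam = tMinus a b c k3 L lam) ∧
    ‖tPlus a b c k3 L (2 * k3 * b * c)‖ ^ 2 =
      (b ^ 2 * L ^ 2 / a + a * c ^ 2 / L ^ 2) ^ 2 /
        ((b ^ 2 * L ^ 2 / a - a * c ^ 2 / L ^ 2) ^ 2 + 4 * b ^ 2 * c ^ 2) ∧
    (b ≠ 0 → c ≠ 0 →
      (b ^ 2 * L ^ 2 / a + a * c ^ 2 / L ^ 2) ^ 2 >
        (b ^ 2 * L ^ 2 / a - a * c ^ 2 / L ^ 2) ^ 2 + 4 * b ^ 2 * c ^ 2 →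
      1 < ‖tPlus a b c k3 L (2 * k3 * b * c)‖ ^ 2) := by
  set Y := b ^ 2 * L ^ 2 / a - a * c ^ 2 / L ^ 2 with hYdef
  set X := b ^ 2 * L ^ 2 / a + a * c ^ 2 / L ^ 2 with hXdef
  have hY : Y ≠ 0 := by
    intro h
    have ha' : a ≠ 0 := ha.ne'
    have hL' : L ≠ 0 := hL.ne'
    have h2 : (b * L ^ 2 - a * c) * (b * L ^ 2 + a * c) = 0 := by
      have : b ^ 2 * L ^ 2 / a = a * c ^ 2 / L ^ 2 := by linarith [sub_eq_zero.mp h]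
      field_simp at this
      nlinarith [this]
    rcases mul_eq_zero.mp h2 with h3 | h3
    · exact hne1 (by linarith)
    · exact hne2 (by linarith)
  have hYp : 0 < Y ^ 2 := by positivity
  have hden : 0 < Y ^ 2 + 4 * b ^ 2 * c ^ 2 := by nlinarith [sq_nonneg (b*c)]
  have hk3' : (k3 : ℝ) ≠ 0 := hk3.ne'
  have hD : Complex.normSq (Dden a b c k3 L (2 * k3 * b * c)) =
      k3 ^ 2 * Y ^ 2 + (2 * k3 * b * c) ^ 2 := by
    unfold Dden
    rw [← hYdef]
    simp only [Complex.normSq_apply, Complex.sub_re, Complex.sub_im, Complex.mul_re,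
      Complex.mul_im, Complex.I_re, Complex.I_im, Complex.ofReal_re, Complex.ofReal_im]
    ring
  have hN : Complex.normSq (Complex.I * (k3 : ℂ) * ((X : ℝ) : ℂ)) = k3 ^ 2 * X ^ 2 := by
    simp only [Complex.normSq_apply, Complex.mul_re, Complex.mul_im, Complex.I_re,
      Complex.I_im, Complex.ofReal_re, Complex.ofReal_im]
    ring
  have key : ‖tPlus a b c k3 L (2 * k3 * b * c)‖ ^ 2 =
      X ^ 2 / (Y ^ 2 + 4 * b ^ 2 * c ^ 2) := by
    rw [Complex.sq_norm]
    unfold tPlus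
    rw [← hXdef, map_div₀, hN, hD]
    rw [div_eq_div_iff (by positivity) hden.ne']
    ring
  refine ⟨fun lam => rfl, key, fun hb hc hgt => ?_⟩
  rw [key]
  rw [lt_div_iff₀ hden]
  linarith
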